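/- Suppose L is a regular tree language and t is a binary term such that t(t(*,*),*) is L-equivalent to t(*,t(*,*)). Let Γ be the arity-0 letters of the alphabet. Then there exists a regular word language K ⊆ Γ* such that for every n ≥ 2, all a1,…,an ∈ Γ, and every n-ary term s ∈ t*, the word a1⋯an belongs to K if and only if the tree s(a1,…,an) belongs to L. -/

import Mathlib

inductive Term (σ : Type) : Type
  | port : Term σ
  | node : σ → List (Term σ) → Term σ

namespace Term

variable {σ : Type}

def ports : Term σ → ℕ
  | .port => 1
  | .node _ ts => (ts.attach.map fun x => ports x.1).sum
decreasing_by
  simp_wf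
  have := List.sizeOf_lt_of_mem x.2
  omega

def size : Term σ → ℕ
  | .port => 1
  | .node _ ts => 1 + (ts.attach.map fun x => size x.1).sum
decreasing_by
  simp_wf
  have := List.sizeOf_lt_of_mem x.2
  omega

def WF (ar : σ → ℕ) : Term σ → Prop
  | .port => True
  | .node a ts => ts.length = ar a ∧ ∀ t ∈ ts.attach, WF ar t.1
decreasing_by
  simp_wf
  have := List.sizeOf_lt_of_mem t.2
  omega

mutual
def subst1 : Term σ → List (Term σ) → Term σ × List (Term σ)
  | .port, l => (l.headD .port, l.tail)
  | .node a ts, l => let p := substL ts l; (.node a p.1, p.2)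
def substL : List (Term σ) → List (Term σ) → List (Term σ) × List (Term σ)
  | [], l => ([], l)
  | t :: ts, l => let p := subst1 t l; let q := substL ts p.2; (p.1 :: q.1, q.2)
end

/-- Substitute the terms `l` for the ports of `t`, in left-to-right order. -/
def subst (t : Term σ) (l : List (Term σ)) : Term σ := (subst1 t l).1

def eval {Q : Type} (δ : σ → List Q → Q) (q0 : Q) : Term σ → Q
  | .port => q0
  | .node a ts => δ a (ts.attach.map fun x => eval δ q0 x.1)
decreasing_by
  simp_wf
  have := List.sizeOf_lt_of_mem x.2
  omega

end Term

inductive TStar {σ : Type} (t : Term σ) : Term σ → Prop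
  | base : TStar t Term.port
  | step {u v : Term σ} : TStar t u → TStar t v → TStar t (t.subst [u, v])

def LEquiv {σ : Type} (ar : σ → ℕ) (L : Set (Term σ)) (n : ℕ) (u u' : Term σ) : Prop :=
  u.ports = n ∧ u'.ports = n ∧
  ∀ s : Term σ, s.ports = 1 → s.WF ar →
    ∀ l : List (Term σ), l.length = n → (∀ x ∈ l, x.ports = 0 ∧ x.WF ar) →
      (s.subst [u.subst l] ∈ L ↔ s.subst [u'.subst l] ∈ L)

def RegularTree {σ : Type} (ar : σ → ℕ) (L : Set (Term σ)) : Prop :=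
  ∃ (Q : Type) (_ : Finite Q) (δ : σ → List Q → Q) (q0 : Q) (F : Set Q),
    L = {u | u.ports = 0 ∧ u.WF ar ∧ u.eval δ q0 ∈ F}

def RegularWord {Γ : Type} (K : Set (List Γ)) : Prop :=
  ∃ (Q : Type) (_ : Fintype Q) (M : DFA Γ Q), K = M.accepts

namespace Term
variable {σ : Type}

theorem ports_node (a : σ) (ts : List (Term σ)) :
    (Term.node a ts).ports = (ts.map ports).sum := by
  rw [ports]
  congr 1
  exact List.attach_map_val (l := ts) (f := ports)

theorem eval_node {Q : Type} (δ : σ → List Q → Q) (q0 : Q) (a : σ) (ts : List (Term σ)) :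
    (Term.node a ts).eval δ q0 = δ a (ts.map (eval δ q0)) := by
  rw [eval]
  congr 1
  exact List.attach_map_val (l := ts) (f := eval δ q0)

theorem WF_node {ar : σ → ℕ} {a : σ} {ts : List (Term σ)} :
    (Term.node a ts).WF ar ↔ ts.length = ar a ∧ ∀ t ∈ ts, t.WF ar := by
  rw [WF]
  simp

theorem WF_port {ar : σ → ℕ} : (Term.port : Term σ).WF ar := by rw [WF]; trivial

end Term

namespace Term
variable {σ : Type}

mutual
theorem subst1_nil : ∀ (t : Term σ), subst1 t [] = (t, [])
  | .port => rfl
  | .node a ts => by rw [subst1, substL_nil ts]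
theorem substL_nil : ∀ (ts : List (Term σ)), substL ts [] = (ts, [])
  | [] => rfl
  | t :: ts => by rw [substL, subst1_nil t, substL_nil ts]
end

mutual
theorem subst1_snd : ∀ (t : Term σ) (l : List (Term σ)), (subst1 t l).2 = l.drop t.ports
  | .port, l => by rw [subst1, ports]; simp [List.drop_one]
  | .node a ts, l => by
      rw [subst1, ports_node]
      exact substL_snd ts l
theorem substL_snd : ∀ (ts l : List (Term σ)), (substL ts l).2 = l.drop ((ts.map ports).sum)
  | [], l => rfl
  | t :: ts, l => by
      rw [substL]
      simp only []
      rw [substL_snd ts, subst1_snd t, List.drop_drop]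
      rw [List.map_cons, List.sum_cons, Nat.add_comm]
end

end Term

namespace Term
variable {σ : Type}

mutual
theorem subst1_append : ∀ (t : Term σ) (l m : List (Term σ)), t.ports ≤ l.length →
    subst1 t (l ++ m) = ((subst1 t l).1, (subst1 t l).2 ++ m)
  | .port, l, m, h => by
      rw [subst1, subst1, ports] at *
      match l, h with
      | x :: l, _ => simp
  | .node a ts, l, m, h => by
      rw [ports_node] at h
      rw [subst1, subst1, substL_append ts l m h]
theorem substL_append : ∀ (ts l m : List (Term σ)), (ts.map ports).sum ≤ l.length →
    substL ts (l ++ m) = ((substL ts l).1, (substL ts l).2 ++ m)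
  | [], l, m, h => by rw [substL, substL]
  | t :: ts, l, m, h => by
      rw [List.map_cons, List.sum_cons] at h
      rw [substL, substL]
      have h1 : t.ports ≤ l.length := by omega
      rw [subst1_append t l m h1]
      simp only []
      rw [substL_append ts _ m (by rw [subst1_snd, List.length_drop]; omega)]
end

theorem subst1_take (t : Term σ) (l : List (Term σ)) (h : t.ports ≤ l.length) :
    (subst1 t l).1 = (subst1 t (l.take t.ports)).1 := by
  conv_lhs => rw [← List.take_append_drop t.ports l]
  rw [subst1_append t _ _ (by simp [List.length_take]; omega)]

mutual
theorem ports_subst1 : ∀ (t : Term σ) (l : List (Term σ)), t.ports = l.length →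
    ((subst1 t l).1).ports = (l.map ports).sum
  | .port, l, h => by
      rw [ports] at h
      match l, h with
      | [x], _ => simp [subst1]
  | .node a ts, l, h => by
      rw [ports_node] at h
      rw [subst1]
      simp only []
      rw [ports_node]
      exact ports_substL ts l h
theorem ports_substL : ∀ (ts l : List (Term σ)), (ts.map ports).sum = l.length →
    (((substL ts l).1).map ports).sum = (l.map ports).sum
  | [], l, h => by
      obtain rfl : l = [] := by simpa using (List.length_eq_zero_iff.mp h.symm)
      rw [substL]
  | t :: ts, l, h => by
      rw [List.map_cons, List.sum_cons] at h
      have h1 : t.ports ≤ l.length := by omega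
      rw [substL]
      simp only [List.map_cons, List.sum_cons]
      rw [subst1_snd]
      have e1 : ((subst1 t l).1).ports = ((l.take t.ports).map ports).sum := by
        rw [subst1_take t l h1, ports_subst1 t _ (by rw [List.length_take]; omega)]
      have e2 := ports_substL ts (l.drop t.ports)
        (by rw [List.length_drop]; omega)
      rw [e1, e2]
      conv_rhs => rw [← List.take_append_drop t.ports l]
      rw [List.map_append, List.sum_append]
end

theorem substL_length : ∀ (ts l : List (Term σ)), ((substL ts l).1).length = ts.length
  | [], l => rfl
  | t :: ts, l => by rw [substL]; simp [substL_length ts]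

mutual
theorem wf_subst1 {ar : σ → ℕ} : ∀ (t : Term σ) (l : List (Term σ)), t.WF ar →
    (∀ x ∈ l, x.WF ar) → ((subst1 t l).1).WF ar
  | .port, l, _, hl => by
      rw [subst1]
      match l with
      | [] => exact WF_port
      | x :: l => exact hl x (by simp)
  | .node a ts, l, hwf, hl => by
      rw [subst1]
      simp only []
      rw [WF_node] at hwf ⊢
      refine ⟨by rw [substL_length, hwf.1], wf_substL ts l hwf.2 hl⟩
theorem wf_substL {ar : σ → ℕ} : ∀ (ts l : List (Term σ)), (∀ x ∈ ts, x.WF ar) →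
    (∀ x ∈ l, x.WF ar) → ∀ x ∈ (substL ts l).1, x.WF ar
  | [], l, _, _ => by rw [substL]; simp
  | t :: ts, l, hts, hl => by
      rw [substL]
      simp only [List.mem_cons]
      rintro x (rfl | hx)
      · exact wf_subst1 t l (hts t (by simp)) hl
      · refine wf_substL ts _ (fun y hy => hts y (by simp [hy])) ?_ x hx
        rw [subst1_snd]
        exact fun y hy => hl y (List.drop_subset _ _ hy)
end

end Term

namespace Term
variable {σ : Type} {Q : Type} (δ : σ → List Q → Q) (q0 : Q)

mutual
def evalP : Term σ → List Q → Q × List Q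
  | .port, qs => (qs.headD q0, qs.tail)
  | .node a ts, qs => let p := evalPL ts qs; (δ a p.1, p.2)
def evalPL : List (Term σ) → List Q → List Q × List Q
  | [], qs => ([], qs)
  | t :: ts, qs => let p := evalP t qs; let q := evalPL ts p.2; (p.1 :: q.1, q.2)
end

variable {δ} {q0}

mutual
theorem evalP_map_eval : ∀ (t : Term σ) (l : List (Term σ)),
    evalP δ q0 t (l.map (eval δ q0)) =
      (eval δ q0 (subst1 t l).1, ((subst1 t l).2).map (eval δ q0))
  | .port, l => by
      rw [evalP, subst1]
      match l with
      | [] => simp [eval]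
      | x :: l => simp
  | .node a ts, l => by
      rw [evalP, subst1]
      simp only []
      rw [evalPL_map_eval ts l, eval_node]
theorem evalPL_map_eval : ∀ (ts l : List (Term σ)),
    evalPL δ q0 ts (l.map (eval δ q0)) =
      (((substL ts l).1).map (eval δ q0), ((substL ts l).2).map (eval δ q0))
  | [], l => by rw [evalPL, substL]; simp
  | t :: ts, l => by
      rw [evalPL, substL]
      simp only []
      rw [evalP_map_eval t l, evalPL_map_eval ts _]
      simp
end

mutual
theorem evalP_snd : ∀ (t : Term σ) (qs : List Q), (evalP δ q0 t qs).2 = qs.drop t.ports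
  | .port, qs => by rw [evalP, ports]; simp [List.drop_one]
  | .node a ts, qs => by rw [evalP, ports_node]; exact evalPL_snd ts qs
theorem evalPL_snd : ∀ (ts : List (Term σ)) (qs : List Q),
    (evalPL δ q0 ts qs).2 = qs.drop ((ts.map ports).sum)
  | [], qs => rfl
  | t :: ts, qs => by
      rw [evalPL]
      simp only []
      rw [evalPL_snd ts, evalP_snd t, List.drop_drop, List.map_cons, List.sum_cons,
        Nat.add_comm]
end

theorem evalPL_fst_length : ∀ (ts : List (Term σ)) (qs : List Q),
    ((evalPL δ q0 ts qs).1).length = ts.length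
  | [], qs => rfl
  | t :: ts, qs => by rw [evalPL]; simp [evalPL_fst_length ts]

mutual
theorem evalP_append : ∀ (t : Term σ) (qs rs : List Q), t.ports ≤ qs.length →
    evalP δ q0 t (qs ++ rs) = ((evalP δ q0 t qs).1, (evalP δ q0 t qs).2 ++ rs)
  | .port, qs, rs, h => by
      rw [ports] at h
      rw [evalP, evalP]
      match qs, h with
      | x :: qs, _ => simp
  | .node a ts, qs, rs, h => by
      rw [ports_node] at h
      rw [evalP, evalP, evalPL_append ts qs rs h]
theorem evalPL_append : ∀ (ts : List (Term σ)) (qs rs : List Q),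
    (ts.map ports).sum ≤ qs.length →
    evalPL δ q0 ts (qs ++ rs) = ((evalPL δ q0 ts qs).1, (evalPL δ q0 ts qs).2 ++ rs)
  | [], qs, rs, h => by rw [evalPL, evalPL]
  | t :: ts, qs, rs, h => by
      rw [List.map_cons, List.sum_cons] at h
      rw [evalPL, evalPL]
      have h1 : t.ports ≤ qs.length := by omega
      rw [evalP_append t qs rs h1]
      simp only []
      rw [evalPL_append ts _ rs (by rw [evalP_snd, List.length_drop]; omega)]
end

theorem evalP_take (t : Term σ) (qs : List Q) (h : t.ports ≤ qs.length) :
    (evalP δ q0 t qs).1 = (evalP δ q0 t (qs.take t.ports)).1 := by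
  conv_lhs => rw [← List.take_append_drop t.ports qs]
  rw [evalP_append t _ _ (by simp [List.length_take]; omega)]

end Term

namespace Term
variable {σ : Type} {Q : Type} {δ : σ → List Q → Q} {q0 : Q}

theorem evalPL_app : ∀ (ts1 ts2 : List (Term σ)) (qs : List Q),
    evalPL δ q0 (ts1 ++ ts2) qs =
      ((evalPL δ q0 ts1 qs).1 ++ (evalPL δ q0 ts2 (evalPL δ q0 ts1 qs).2).1,
        (evalPL δ q0 ts2 (evalPL δ q0 ts1 qs).2).2)
  | [], ts2, qs => by rw [evalPL]; simp
  | t :: ts1, ts2, qs => by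
      rw [List.cons_append, evalPL, evalPL]
      simp only []
      rw [evalPL_app ts1 ts2 _]
      simp

mutual
theorem evalP_subst1 : ∀ (t : Term σ) (l : List (Term σ)) (qs : List Q),
    t.ports = l.length →
    (evalP δ q0 (subst1 t l).1 qs).1 = (evalP δ q0 t (evalPL δ q0 l qs).1).1
  | .port, l, qs, h => by
      rw [ports] at h
      match l, h with
      | [x], _ =>
        rw [subst1]
        simp only [List.headD]
        conv_rhs => rw [evalPL, evalPL, evalP]
        simp
  | .node a ts, l, qs, h => by
      rw [ports_node] at h
      rw [subst1]
      simp only []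
      rw [evalP, evalP]
      simp only []
      rw [evalPL_substL ts l qs h]
theorem evalPL_substL : ∀ (ts l : List (Term σ)) (qs : List Q),
    (ts.map ports).sum = l.length →
    (evalPL δ q0 (substL ts l).1 qs).1 = (evalPL δ q0 ts (evalPL δ q0 l qs).1).1
  | [], l, qs, h => by
      obtain rfl : l = [] := by simpa using (List.length_eq_zero_iff.mp h.symm)
      rfl
  | t :: ts, l, qs, h => by
      rw [List.map_cons, List.sum_cons] at h
      have h1 : t.ports ≤ l.length := by omega
      have htk : t.ports = (l.take t.ports).length := by rw [List.length_take]; omega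
      -- LHS
      rw [substL]
      simp only []
      rw [evalPL]
      simp only []
      have hp1 : (evalP δ q0 (subst1 t l).1 qs).1
          = (evalP δ q0 t (evalPL δ q0 (l.take t.ports) qs).1).1 := by
        rw [subst1_take t l h1, evalP_subst1 t (l.take t.ports) qs htk]
      have hports : ((subst1 t l).1).ports = ((l.take t.ports).map ports).sum := by
        rw [subst1_take t l h1, ports_subst1 t _ htk]
      have hp2 : (evalP δ q0 (subst1 t l).1 qs).2
          = qs.drop (((l.take t.ports).map ports).sum) := by
        rw [evalP_snd, hports]
      rw [hp1, hp2, subst1_snd]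
      rw [evalPL_substL ts (l.drop t.ports) _ (by rw [List.length_drop]; omega)]
      -- RHS
      conv_rhs => rw [← List.take_append_drop t.ports l]
      rw [evalPL_app]
      rw [evalPL_snd]
      have hlen : ((evalPL δ q0 (l.take t.ports) qs).1).length = t.ports := by
        rw [evalPL_fst_length, List.length_take]; omega
      rw [evalPL, evalP_append t _ _ (by rw [hlen])]
      simp only []
      rw [evalP_snd]
      have hz : List.drop t.ports (evalPL δ q0 (l.take t.ports) qs).1 = [] := by
        exact List.drop_eq_nil_of_le (le_of_eq hlen)
      rw [hz, List.nil_append]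
end

end Term

section Rot

variable {σ Q : Type} (ar : σ → ℕ) (δ : σ → List Q → Q) (q0 : Q) (F : Set Q) (t : Term σ)

open Term

/-- realizable states -/
def Rz : Set Q := {q | ∃ x : Term σ, x.ports = 0 ∧ x.WF ar ∧ x.eval δ q0 = q}

/-- context equivalence of states -/
def Sim (q q' : Q) : Prop := ∀ c : Term σ, c.ports = 1 → c.WF ar →
  ((Term.evalP δ q0 c [q]).1 ∈ F ↔ (Term.evalP δ q0 c [q']).1 ∈ F)

def f2 (a b : Q) : Q := (Term.evalP δ q0 t [a, b]).1

variable {ar δ q0 F t}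

theorem sim_refl {q : Q} : Sim ar δ q0 F q q := fun _ _ _ => Iff.rfl
theorem sim_symm {q q' : Q} (h : Sim ar δ q0 F q q') : Sim ar δ q0 F q' q :=
  fun c h1 h2 => (h c h1 h2).symm
theorem sim_trans {q q' q'' : Q} (h : Sim ar δ q0 F q q') (h' : Sim ar δ q0 F q' q'') :
    Sim ar δ q0 F q q'' := fun c h1 h2 => (h c h1 h2).trans (h' c h1 h2)

theorem evalP_zero {x : Term σ} (hx : x.ports = 0) (qs : List Q) :
    Term.evalP δ q0 x qs = (x.eval δ q0, qs) := by
  have h0 : Term.evalP δ q0 x [] = (x.eval δ q0, []) := by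
    have := evalP_map_eval (δ := δ) (q0 := q0) x []
    simpa [subst1_nil] using this
  calc Term.evalP δ q0 x qs = Term.evalP δ q0 x ([] ++ qs) := by simp
  _ = ((Term.evalP δ q0 x []).1, (Term.evalP δ q0 x []).2 ++ qs) :=
      evalP_append x [] qs (by simp [hx])
  _ = (x.eval δ q0, qs) := by simp [h0]

theorem evalP_two (h2 : t.ports = 2) (u v : Term σ) (qs : List Q) :
    (Term.evalP δ q0 (t.subst [u, v]) qs).1 =
      (Term.evalP δ q0 t
        [(Term.evalP δ q0 u qs).1, (Term.evalP δ q0 v (Term.evalP δ q0 u qs).2).1]).1 := by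
  rw [Term.subst, evalP_subst1 t [u, v] qs (by simp [h2])]
  rw [evalPL, evalPL, evalPL]

theorem evalP_ctx {c : Term σ} (hc : c.ports = 1) (X : Term σ) (q : Q) :
    (Term.evalP δ q0 (c.subst [X]) [q]).1 =
      (Term.evalP δ q0 c [(Term.evalP δ q0 X [q]).1]).1 := by
  rw [Term.subst, evalP_subst1 c [X] [q] (by simp [hc])]
  rw [evalPL, evalPL]

/-- ports and wf and eval of a 2-substitution -/
theorem rz_f2 (h2 : t.ports = 2) (hwf : t.WF ar) {a b : Q}
    (ha : a ∈ Rz ar δ q0) (hb : b ∈ Rz ar δ q0) : f2 δ q0 t a b ∈ Rz ar δ q0 := by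
  obtain ⟨x, hx0, hxwf, rfl⟩ := ha
  obtain ⟨y, hy0, hywf, rfl⟩ := hb
  refine ⟨t.subst [x, y], ?_, ?_, ?_⟩
  · rw [Term.subst, ports_subst1 t [x, y] (by simp [h2])]
    simp [hx0, hy0]
  · exact wf_subst1 t [x, y] hwf (by rintro z hz; simp at hz; rcases hz with rfl | rfl <;> assumption)
  · have := evalP_map_eval (δ := δ) (q0 := q0) t [x, y]
    simp only [List.map_cons, List.map_nil] at this
    rw [f2, this, Term.subst]

theorem simL (h2 : t.ports = 2) (hwf : t.WF ar) {a a' b : Q} (hb : b ∈ Rz ar δ q0)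
    (h : Sim ar δ q0 F a a') : Sim ar δ q0 F (f2 δ q0 t a b) (f2 δ q0 t a' b) := by
  obtain ⟨y, hy0, hywf, rfl⟩ := hb
  intro c hc1 hcwf
  have key : ∀ q : Q, (Term.evalP δ q0 (c.subst [t.subst [Term.port, y]]) [q]).1 =
      (Term.evalP δ q0 c [f2 δ q0 t q (y.eval δ q0)]).1 := by
    intro q
    rw [evalP_ctx hc1]
    congr 2
    rw [evalP_two h2]
    rw [Term.evalP]
    simp only [List.headD, List.tail]
    rw [evalP_zero hy0]
    rfl
  have hports : (c.subst [t.subst [Term.port, y]]).ports = 1 := by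
    rw [Term.subst, ports_subst1 c _ (by simp [hc1])]
    simp only [List.map_cons, List.map_nil, List.sum_cons, List.sum_nil]
    rw [Term.subst, ports_subst1 t _ (by simp [h2])]
    simp [Term.ports, hy0]
  have hwf' : (c.subst [t.subst [Term.port, y]]).WF ar := by
    refine wf_subst1 c _ hcwf ?_
    rintro z hz; simp at hz; subst hz
    refine wf_subst1 t _ hwf ?_
    rintro z hz; simp at hz
    rcases hz with rfl | rfl
    · exact WF_port
    · exact hywf
  have := h (c.subst [t.subst [Term.port, y]]) hports hwf'
  rwa [key a, key a'] at this

theorem simR (h2 : t.ports = 2) (hwf : t.WF ar) {a b b' : Q} (ha : a ∈ Rz ar δ q0)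
    (h : Sim ar δ q0 F b b') : Sim ar δ q0 F (f2 δ q0 t a b) (f2 δ q0 t a b') := by
  obtain ⟨x, hx0, hxwf, rfl⟩ := ha
  intro c hc1 hcwf
  have key : ∀ q : Q, (Term.evalP δ q0 (c.subst [t.subst [x, Term.port]]) [q]).1 =
      (Term.evalP δ q0 c [f2 δ q0 t (x.eval δ q0) q]).1 := by
    intro q
    rw [evalP_ctx hc1]
    congr 2
    rw [evalP_two h2]
    rw [evalP_zero hx0]
    rw [Term.evalP]
    rfl
  have hports : (c.subst [t.subst [x, Term.port]]).ports = 1 := by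
    rw [Term.subst, ports_subst1 c _ (by simp [hc1])]
    simp only [List.map_cons, List.map_nil, List.sum_cons, List.sum_nil]
    rw [Term.subst, ports_subst1 t _ (by simp [h2])]
    simp [Term.ports, hx0]
  have hwf' : (c.subst [t.subst [x, Term.port]]).WF ar := by
    refine wf_subst1 c _ hcwf ?_
    rintro z hz; simp at hz; subst hz
    refine wf_subst1 t _ hwf ?_
    rintro z hz; simp at hz
    rcases hz with rfl | rfl
    · exact hxwf
    · exact WF_port
  have := h (c.subst [t.subst [x, Term.port]]) hports hwf'
  rwa [key b, key b'] at this

end Rot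

section Rot2

variable {σ Q : Type} {ar : σ → ℕ} {δ : σ → List Q → Q} {q0 : Q} {F : Set Q} {t : Term σ}

open Term

theorem rz_foldl (h2 : t.ports = 2) (hwf : t.WF ar) :
    ∀ (l : List Q) (q : Q), q ∈ Rz ar δ q0 → (∀ x ∈ l, x ∈ Rz ar δ q0) →
      List.foldl (f2 δ q0 t) q l ∈ Rz ar δ q0
  | [], q, hq, _ => hq
  | x :: l, q, hq, hl => by
      rw [List.foldl_cons]
      exact rz_foldl h2 hwf l _ (rz_f2 h2 hwf hq (hl x (by simp)))
        (fun y hy => hl y (by simp [hy]))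

theorem sim_foldl (h2 : t.ports = 2) (hwf : t.WF ar) :
    ∀ (l : List Q), (∀ x ∈ l, x ∈ Rz ar δ q0) → ∀ {q q' : Q}, Sim ar δ q0 F q q' →
      Sim ar δ q0 F (List.foldl (f2 δ q0 t) q l) (List.foldl (f2 δ q0 t) q' l)
  | [], _, q, q', h => h
  | x :: l, hl, q, q', h => by
      rw [List.foldl_cons, List.foldl_cons]
      exact sim_foldl h2 hwf l (fun y hy => hl y (by simp [hy]))
        (simL h2 hwf (hl x (by simp)) h)

theorem sim_assoc_fold (h2 : t.ports = 2) (hwf : t.WF ar)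
    (hstar : ∀ a ∈ Rz ar δ q0, ∀ b ∈ Rz ar δ q0, ∀ c ∈ Rz ar δ q0,
      Sim ar δ q0 F (f2 δ q0 t (f2 δ q0 t a b) c) (f2 δ q0 t a (f2 δ q0 t b c))) :
    ∀ (l : List Q) (a b : Q), (∀ x ∈ l, x ∈ Rz ar δ q0) → a ∈ Rz ar δ q0 → b ∈ Rz ar δ q0 →
      Sim ar δ q0 F (f2 δ q0 t a (List.foldl (f2 δ q0 t) b l))
        (List.foldl (f2 δ q0 t) (f2 δ q0 t a b) l)
  | [], a, b, _, _, _ => sim_refl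
  | c :: l, a, b, hl, ha, hb => by
      rw [List.foldl_cons, List.foldl_cons]
      have hc : c ∈ Rz ar δ q0 := hl c (by simp)
      have hl' : ∀ x ∈ l, x ∈ Rz ar δ q0 := fun y hy => hl y (by simp [hy])
      refine sim_trans (sim_assoc_fold h2 hwf hstar l a (f2 δ q0 t b c) hl' ha
        (rz_f2 h2 hwf hb hc)) ?_
      exact sim_foldl h2 hwf l hl' (sim_symm (hstar a ha b hb c hc))

theorem tstar_wf (hwf : t.WF ar) : ∀ {s : Term σ}, TStar t s → s.WF ar := by
  intro s hs
  induction hs with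
  | base => exact WF_port
  | step hu hv ihu ihv =>
      refine wf_subst1 t _ hwf ?_
      rintro z hz; simp at hz
      rcases hz with rfl | rfl <;> assumption

theorem tstar_ports_pos (h2 : t.ports = 2) : ∀ {s : Term σ}, TStar t s → 1 ≤ s.ports := by
  intro s hs
  induction hs with
  | base => rw [Term.ports]
  | @step u v hu hv ihu ihv =>
      rw [Term.subst, ports_subst1 t [u, v] (by simp [h2])]
      simp only [List.map_cons, List.map_nil, List.sum_cons, List.sum_nil]
      omega

theorem tstar_main (h2 : t.ports = 2) (hwf : t.WF ar)
    (hstar : ∀ a ∈ Rz ar δ q0, ∀ b ∈ Rz ar δ q0, ∀ c ∈ Rz ar δ q0,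
      Sim ar δ q0 F (f2 δ q0 t (f2 δ q0 t a b) c) (f2 δ q0 t a (f2 δ q0 t b c))) :
    ∀ {s : Term σ}, TStar t s → ∀ qs : List Q, qs.length = s.ports →
      (∀ x ∈ qs, x ∈ Rz ar δ q0) →
      (Term.evalP δ q0 s qs).1 ∈ Rz ar δ q0 ∧
      Sim ar δ q0 F (Term.evalP δ q0 s qs).1
        (List.foldl (f2 δ q0 t) (qs.headD q0) qs.tail) := by
  intro s hs
  induction hs with
  | base =>
      intro qs hlen hqs
      rw [Term.ports] at hlen
      match qs, hlen with
      | [q], _ =>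
        refine ⟨?_, ?_⟩ <;> rw [Term.evalP] <;> simp
        · exact hqs q (by simp)
        · exact sim_refl
  | @step u v hu hv ihu ihv =>
      intro qs hlen hqs
      have hup : 1 ≤ u.ports := tstar_ports_pos h2 hu
      have hvp : 1 ≤ v.ports := tstar_ports_pos h2 hv
      rw [Term.subst, ports_subst1 t [u, v] (by simp [h2])] at hlen
      simp only [List.map_cons, List.map_nil, List.sum_cons, List.sum_nil] at hlen
      obtain ⟨l1, l2, rfl, hlen1, hlen2⟩ :
          ∃ l1 l2 : List Q, qs = l1 ++ l2 ∧ l1.length = u.ports ∧ l2.length = v.ports := by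
        refine ⟨qs.take u.ports, qs.drop u.ports, (List.take_append_drop _ _).symm, ?_, ?_⟩ <;>
          simp only [List.length_take, List.length_drop] <;> omega
      obtain ⟨a, r1, rfl⟩ := List.exists_cons_of_ne_nil
        (l := l1) (by intro h; rw [h] at hlen1; simp at hlen1; omega)
      obtain ⟨b, r2, rfl⟩ := List.exists_cons_of_ne_nil
        (l := l2) (by intro h; rw [h] at hlen2; simp at hlen2; omega)
      have hqs1 : ∀ x ∈ a :: r1, x ∈ Rz ar δ q0 := fun x hx => hqs x (by simp at hx ⊢; tauto)
      have hqs2 : ∀ x ∈ b :: r2, x ∈ Rz ar δ q0 := fun x hx => hqs x (by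
        simp only [List.mem_append]; exact Or.inr hx)
      have he : Term.evalP δ q0 u ((a :: r1) ++ (b :: r2)) =
          ((Term.evalP δ q0 u (a :: r1)).1, b :: r2) := by
        rw [evalP_append u _ _ (le_of_eq hlen1.symm), evalP_snd,
          List.drop_eq_nil_of_le (le_of_eq hlen1), List.nil_append]
      have hval : (Term.evalP δ q0 (t.subst [u, v]) ((a :: r1) ++ (b :: r2))).1 =
          f2 δ q0 t (Term.evalP δ q0 u (a :: r1)).1 (Term.evalP δ q0 v (b :: r2)).1 := by
        rw [evalP_two h2, he]; rfl
      obtain ⟨hAr, hAs⟩ := ihu (a :: r1) hlen1 hqs1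
      obtain ⟨hBr, hBs⟩ := ihv (b :: r2) hlen2 hqs2
      have hA' : List.foldl (f2 δ q0 t) a r1 ∈ Rz ar δ q0 :=
        rz_foldl h2 hwf r1 a (hqs1 a (by simp)) (fun y hy => hqs1 y (by simp [hy]))
      constructor
      · rw [hval]; exact rz_f2 h2 hwf hAr hBr
      · rw [hval]
        simp only [List.cons_append, List.headD, List.tail, List.foldl_append, List.foldl_cons]
        refine sim_trans (simL (F := F) h2 hwf hBr hAs) ?_
        refine sim_trans (simR (F := F) h2 hwf hA' hBs) ?_
        exact sim_assoc_fold h2 hwf hstar r2 _ b (fun y hy => hqs2 y (by simp [hy])) hA'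
          (hqs2 b (by simp))

end Rot2

section Rot3

variable {σ Q : Type} {ar : σ → ℕ} {δ : σ → List Q → Q} {q0 : Q} {F : Set Q} {t : Term σ}

open Term

theorem mem_ctx {c W : Term σ} (hc1 : c.ports = 1) (hcwf : c.WF ar)
    (hW0 : W.ports = 0) (hWwf : W.WF ar) :
    (c.subst [W] ∈ {u : Term σ | u.ports = 0 ∧ u.WF ar ∧ u.eval δ q0 ∈ F}) ↔
      (Term.evalP δ q0 c [W.eval δ q0]).1 ∈ F := by
  have hports : (c.subst [W]).ports = 0 := by
    rw [Term.subst, ports_subst1 c [W] (by simp [hc1])]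
    simp [hW0]
  have hwf : (c.subst [W]).WF ar := by
    refine wf_subst1 c _ hcwf ?_
    rintro z hz; simp at hz; subst hz; exact hWwf
  have heval : (c.subst [W]).eval δ q0 = (Term.evalP δ q0 c [W.eval δ q0]).1 := by
    have := evalP_map_eval (δ := δ) (q0 := q0) c [W]
    simp only [List.map_cons, List.map_nil] at this
    rw [Term.subst, this]
  simp [Set.mem_setOf_eq, hports, hwf, heval]

theorem eval_u3L (h2 : t.ports = 2) (aq bq cq : Q) :
    (Term.evalP δ q0 (t.subst [t, Term.port]) [aq, bq, cq]).1 =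
      f2 δ q0 t (f2 δ q0 t aq bq) cq := by
  rw [evalP_two h2]
  have h1 : Term.evalP δ q0 t [aq, bq, cq] = ((Term.evalP δ q0 t [aq, bq]).1, [cq]) := by
    have : ([aq, bq, cq] : List Q) = [aq, bq] ++ [cq] := rfl
    rw [this, evalP_append t [aq, bq] [cq] (by simp [h2]), evalP_snd, h2]
    rfl
  rw [h1]
  rfl

theorem eval_u3R (h2 : t.ports = 2) (aq bq cq : Q) :
    (Term.evalP δ q0 (t.subst [Term.port, t]) [aq, bq, cq]).1 =
      f2 δ q0 t aq (f2 δ q0 t bq cq) := by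
  rw [evalP_two h2]
  rw [Term.evalP]
  rfl

theorem ports_u3 (h2 : t.ports = 2) : (t.subst [t, Term.port]).ports = 3 := by
  rw [Term.subst, ports_subst1 t [t, Term.port] (by simp [h2])]
  simp [h2, Term.ports]

theorem ports_u3' (h2 : t.ports = 2) : (t.subst [Term.port, t]).ports = 3 := by
  rw [Term.subst, ports_subst1 t [Term.port, t] (by simp [h2])]
  simp [h2, Term.ports]

end Rot3

/-- Corollary of the Rotation Lemma: if `L` is regular and `t(t(*,*),*)` is
`L`-equivalent to `t(*,t(*,*))`, then there is a regular word language `K` over the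
arity-0 letters such that `a₁⋯aₙ ∈ K` iff `s(a₁,…,aₙ) ∈ L`, for every `n ≥ 2` and
every `n`-ary `s ∈ t*`. -/
theorem rotation_corollary {σ : Type} (ar : σ → ℕ) (L : Set (Term σ))
    (hL : RegularTree ar L) (t : Term σ) (ht : t.ports = 2) (hwf : t.WF ar)
    (hrot : LEquiv ar L 3 (t.subst [t, Term.port]) (t.subst [Term.port, t])) :
    ∃ K : Set (List {x : σ // ar x = 0}), RegularWord K ∧
      ∀ n : ℕ, 2 ≤ n → ∀ as : List {x : σ // ar x = 0}, as.length = n →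
        ∀ s : Term σ, TStar t s → s.ports = n →
          (as ∈ K ↔ s.subst (as.map fun g => Term.node g.1 []) ∈ L) := by
  obtain ⟨Q, hfin, δ, q0, F, rfl⟩ := hL
  classical
  -- the rotation hypothesis, semantically
  have hstar : ∀ a ∈ Rz ar δ q0, ∀ b ∈ Rz ar δ q0, ∀ c ∈ Rz ar δ q0,
      Sim ar δ q0 F (f2 δ q0 t (f2 δ q0 t a b) c) (f2 δ q0 t a (f2 δ q0 t b c)) := by
    rintro a ⟨x, hx0, hxwf, rfl⟩ b ⟨y, hy0, hywf, rfl⟩ c ⟨z, hz0, hzwf, rfl⟩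
    intro cterm hc1 hcwf
    have hfill : ∀ w ∈ [x, y, z], w.ports = 0 ∧ w.WF ar := by
      rintro w hw; simp at hw; rcases hw with rfl | rfl | rfl <;> exact ⟨by assumption, by assumption⟩
    have key := hrot.2.2 cterm hc1 hcwf [x, y, z] (by simp) hfill
    have hu0 : ((t.subst [t, Term.port]).subst [x, y, z]).ports = 0 := by
      rw [Term.subst, Term.ports_subst1 _ [x, y, z] (by simp [ports_u3 ht])]
      simp [hx0, hy0, hz0]
    have hu0' : ((t.subst [Term.port, t]).subst [x, y, z]).ports = 0 := by
      rw [Term.subst, Term.ports_subst1 _ [x, y, z] (by simp [ports_u3' ht])]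
      simp [hx0, hy0, hz0]
    have hwfu : t.WF ar ∧ (Term.port : Term σ).WF ar := ⟨hwf, Term.WF_port⟩
    have hfillwf : ∀ w ∈ ([x, y, z] : List (Term σ)), w.WF ar := fun w hw => (hfill w hw).2
    have hwu : ((t.subst [t, Term.port]).subst [x, y, z]).WF ar := by
      refine Term.wf_subst1 _ _ ?_ hfillwf
      refine Term.wf_subst1 _ _ hwf ?_
      rintro w hw; simp at hw; rcases hw with rfl | rfl
      · exact hwf
      · exact Term.WF_port
    have hwu' : ((t.subst [Term.port, t]).subst [x, y, z]).WF ar := by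
      refine Term.wf_subst1 _ _ ?_ hfillwf
      refine Term.wf_subst1 _ _ hwf ?_
      rintro w hw; simp at hw; rcases hw with rfl | rfl
      · exact Term.WF_port
      · exact hwf
    rw [mem_ctx hc1 hcwf hu0 hwu, mem_ctx hc1 hcwf hu0' hwu'] at key
    have he1 : ((t.subst [t, Term.port]).subst [x, y, z]).eval δ q0 =
        f2 δ q0 t (f2 δ q0 t (x.eval δ q0) (y.eval δ q0)) (z.eval δ q0) := by
      have := Term.evalP_map_eval (δ := δ) (q0 := q0) (t.subst [t, Term.port]) [x, y, z]
      simp only [List.map_cons, List.map_nil] at this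
      rw [Term.subst, ← eval_u3L ht, this]
    have he2 : ((t.subst [Term.port, t]).subst [x, y, z]).eval δ q0 =
        f2 δ q0 t (x.eval δ q0) (f2 δ q0 t (y.eval δ q0) (z.eval δ q0)) := by
      have := Term.evalP_map_eval (δ := δ) (q0 := q0) (t.subst [Term.port, t]) [x, y, z]
      simp only [List.map_cons, List.map_nil] at this
      rw [Term.subst, ← eval_u3R ht, this]
    rw [he1, he2] at key
    exact key
  -- the DFA
  set g : {x : σ // ar x = 0} → Q := fun a => δ a.1 [] with hg
  set M : DFA {x : σ // ar x = 0} (Option Q) :=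
    ⟨fun o a => match o with
      | none => some (g a)
      | some q => some (f2 δ q0 t q (g a)), none, {o | ∃ q, o = some q ∧ q ∈ F}⟩ with hM
  refine ⟨M.accepts, ⟨Option Q, by haveI := Fintype.ofFinite Q; infer_instance, M, rfl⟩, ?_⟩
  have hevalFrom : ∀ (as : List {x : σ // ar x = 0}) (q : Q),
      M.evalFrom (some q) as = some (as.foldl (fun q x => f2 δ q0 t q (g x)) q) := by
    intro as
    induction as with
    | nil => intro q; rfl
    | cons a as ih => intro q; rw [List.foldl_cons, ← ih]; rfl
  intro n hn as hlen s hs hsp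
  obtain ⟨a, as', rfl⟩ := List.exists_cons_of_ne_nil
    (l := as) (by intro h; rw [h] at hlen; simp at hlen; omega)
  set l : List (Term σ) := (a :: as').map fun g => Term.node g.1 [] with hl
  have hl0 : ∀ x ∈ l, x.ports = 0 ∧ x.WF ar := by
    rintro x hx
    rw [hl] at hx
    simp only [List.mem_map] at hx
    obtain ⟨b, _, rfl⟩ := hx
    refine ⟨by simp [Term.ports_node], ?_⟩
    rw [Term.WF_node]
    exact ⟨by simp [b.2], by simp⟩
  have hllen : l.length = s.ports := by rw [hl, List.length_map, hlen, hsp]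
  -- membership on the right
  have hports : (s.subst l).ports = 0 := by
    rw [Term.subst, Term.ports_subst1 s l hllen.symm]
    apply List.sum_eq_zero
    intro x hx
    simp only [List.mem_map] at hx
    obtain ⟨y, hy, rfl⟩ := hx
    exact (hl0 y hy).1
  have hwfs : (s.subst l).WF ar := Term.wf_subst1 s l (tstar_wf hwf hs) (fun x hx => (hl0 x hx).2)
  have heval : (s.subst l).eval δ q0 = (Term.evalP δ q0 s (l.map (Term.eval δ q0))).1 := by
    rw [Term.evalP_map_eval s l, Term.subst]
  have hmap : l.map (Term.eval δ q0) = g a :: as'.map g := by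
    rw [hl, List.map_map, show (g a :: as'.map g) = (a :: as').map g from by rw [List.map_cons]]
    apply List.map_congr_left
    intro b _
    simp [Function.comp, Term.eval_node, hg]
  have hRz : ∀ x ∈ g a :: as'.map g, x ∈ Rz ar δ q0 := by
    rw [← hmap]
    rintro x hx
    simp only [List.mem_map] at hx
    obtain ⟨y, hy, rfl⟩ := hx
    exact ⟨y, (hl0 y hy).1, (hl0 y hy).2, rfl⟩
  have hmain := (tstar_main (F := F) ht hwf hstar hs (g a :: as'.map g)
    (by rw [← hmap, List.length_map]; exact hllen) hRz).2
  have hport := hmain Term.port (by rw [Term.ports]) Term.WF_port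
  have hp2 : (Term.evalP δ q0 Term.port
      [List.foldl (f2 δ q0 t) ((g a :: as'.map g).headD q0) (g a :: as'.map g).tail]).1 =
      List.foldl (f2 δ q0 t) (g a) (as'.map g) := by
    rw [Term.evalP]
    rfl
  have hp1 : (Term.evalP δ q0 Term.port [(Term.evalP δ q0 s (g a :: as'.map g)).1]).1 =
      (Term.evalP δ q0 s (g a :: as'.map g)).1 := by
    rw [Term.evalP]
    rfl
  rw [hp1, hp2] at hport
  -- left side
  have hacc : ((a :: as') ∈ M.accepts) ↔
      (as'.foldl (fun q x => f2 δ q0 t q (g x)) (g a)) ∈ F := by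
    rw [DFA.mem_accepts]
    have h1 : M.eval (a :: as') = M.evalFrom (some (g a)) as' := rfl
    rw [h1, hevalFrom as' (g a)]
    simp [hM]
  refine hacc.trans ?_
  rw [Set.mem_setOf_eq]
  simp only [hports, hwfs, true_and]
  rw [heval, hmap]
  rw [← List.foldl_map (f := g) (g := f2 δ q0 t)]
  exact hport.symm
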